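/- For any *-term of the form P ∧❛ Q (with P a *-term and Q in the category P^d), se(P ∧❛ Q) has no candidate disjunction decomposition (cdd). Similarly, for any *-term of the form P ∨❛ Q (with P a *-term and Q in the category P^c), se(P ∨❛ Q) has no candidate conjunction decomposition (ccd). -/
import Mathlib


/-- Evaluation trees over a set `A` of atoms, with leaves `T` and `F`. -/
inductive ETree (A : Type) : Type
  | leafT : ETree A
  | leafF : ETree A
  | node : ETree A → A → ETree A → ETree A

namespace ETree

/-- Leaf replacement `X[T↦Y, F↦Z]`. -/
def repl {A : Type} : ETree A → ETree A → ETree A → ETree A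
  | leafT, y, _ => y
  | leafF, _, z => z
  | node l a r, y, z => node (repl l y z) a (repl r y z)

end ETree

namespace ETree

/-- The tree contains the leaf `T`. -/
def hasT {A : Type} : ETree A → Prop
  | leafT => True
  | leafF => False
  | node l _ r => hasT l ∨ hasT r

/-- The tree contains the leaf `F`. -/
def hasF {A : Type} : ETree A → Prop
  | leafT => False
  | leafF => True
  | node l _ r => hasF l ∨ hasF r

end ETree

/-- Closed sequential propositional statements over `A`:
`P ::= a | T | F | ¬P | P ∧❛ P | P ∨❛ P`. -/
inductive STerm (A : Type) : Type
  | atom : A → STerm A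
  | tt : STerm A
  | ff : STerm A
  | neg : STerm A → STerm A
  | and : STerm A → STerm A → STerm A
  | or : STerm A → STerm A → STerm A

/-- The short-circuit evaluation function `se : S_A → T_A`. -/
def se {A : Type} : STerm A → ETree A
  | .tt => .leafT
  | .ff => .leafF
  | .atom a => .node .leafT a .leafF
  | .neg P => (se P).repl .leafF .leafT
  | .and P Q => (se P).repl (se Q) .leafF
  | .or P Q => (se P).repl .leafT (se Q)

/-- T-terms: `P^T ::= T | (a ∧❛ P^T) ∨❛ P^T`. -/
inductive IsTTerm {A : Type} : STerm A → Prop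
  | tt : IsTTerm .tt
  | node (a : A) {P Q} : IsTTerm P → IsTTerm Q → IsTTerm (.or (.and (.atom a) P) Q)

/-- F-terms: `P^F ::= F | (a ∨❛ P^F) ∧❛ P^F`. -/
inductive IsFTerm {A : Type} : STerm A → Prop
  | ff : IsFTerm .ff
  | node (a : A) {P Q} : IsFTerm P → IsFTerm Q → IsFTerm (.and (.or (.atom a) P) Q)

/-- ℓ-terms: `P^ℓ ::= (a ∧❛ P^T) ∨❛ P^F | (¬a ∧❛ P^T) ∨❛ P^F`. -/
inductive IsLTerm {A : Type} : STerm A → Prop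
  | pos (a : A) {P Q} : IsTTerm P → IsFTerm Q → IsLTerm (.or (.and (.atom a) P) Q)
  | neg (a : A) {P Q} : IsTTerm P → IsFTerm Q → IsLTerm (.or (.and (.neg (.atom a)) P) Q)

mutual
/-- The category `P^c ::= P^ℓ | P^* ∧❛ P^d`. -/
inductive IsCTerm {A : Type} : STerm A → Prop
  | ell {P} : IsLTerm P → IsCTerm P
  | and {P Q} : IsStarTerm P → IsDTerm Q → IsCTerm (.and P Q)

/-- The category `P^d ::= P^ℓ | P^* ∨❛ P^c`. -/
inductive IsDTerm {A : Type} : STerm A → Prop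
  | ell {P} : IsLTerm P → IsDTerm P
  | or {P Q} : IsStarTerm P → IsCTerm Q → IsDTerm (.or P Q)

/-- *-terms: `P^* ::= P^c | P^d`. -/
inductive IsStarTerm {A : Type} : STerm A → Prop
  | c {P} : IsCTerm P → IsStarTerm P
  | d {P} : IsDTerm P → IsStarTerm P
end

/-- Binary trees over `A` with leaves in `{T, F, △}`. -/
inductive DTree (A : Type) : Type
  | leafT : DTree A
  | leafF : DTree A
  | leafD : DTree A
  | node : DTree A → A → DTree A → DTree A

namespace DTree

/-- `X[△↦Z]`: replace every `△`-leaf of `X` by the evaluation tree `Z`. -/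
def substD {A : Type} : DTree A → ETree A → ETree A
  | leafT, _ => .leafT
  | leafF, _ => .leafF
  | leafD, z => z
  | node l a r, z => .node (substD l z) a (substD r z)

/-- The tree contains the leaf `T`. -/
def hasT {A : Type} : DTree A → Prop
  | leafT => True
  | leafF => False
  | leafD => False
  | node l _ r => hasT l ∨ hasT r

/-- The tree contains the leaf `F`. -/
def hasF {A : Type} : DTree A → Prop
  | leafT => False
  | leafF => True
  | leafD => False
  | node l _ r => hasF l ∨ hasF r

/-- The tree contains the leaf `△`. -/
def hasD {A : Type} : DTree A → Prop
  | leafT => False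
  | leafF => False
  | leafD => True
  | node l _ r => hasD l ∨ hasD r

end DTree

/-- `(Y, Z)` is a candidate conjunction decomposition (ccd) of `X`. -/
def IsCCD {A : Type} (Y : DTree A) (Z : ETree A) (X : ETree A) : Prop :=
  X = Y.substD Z ∧ Y.hasD ∧ Y.hasF ∧ ¬ Y.hasT ∧ Z.hasT ∧ Z.hasF

/-- `(Y, Z)` is a candidate disjunction decomposition (cdd) of `X`. -/
def IsCDD {A : Type} (Y : DTree A) (Z : ETree A) (X : ETree A) : Prop :=
  X = Y.substD Z ∧ Y.hasD ∧ Y.hasT ∧ ¬ Y.hasF ∧ Z.hasT ∧ Z.hasF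


namespace ETree

/-- Number of leaves+nodes of an evaluation tree. -/
def size {A : Type} : ETree A → ℕ
  | leafT => 1
  | leafF => 1
  | node l _ r => size l + size r + 1

theorem size_pos {A : Type} (X : ETree A) : 0 < X.size := by
  cases X <;> simp [size]

theorem hasT_repl {A : Type} (G U V : ETree A) :
    (G.repl U V).hasT ↔ (G.hasT ∧ U.hasT) ∨ (G.hasF ∧ V.hasT) := by
  induction G with
  | leafT => simp [repl, hasT, hasF]
  | leafF => simp [repl, hasT, hasF]
  | node l a r ihl ihr =>
    simp only [repl, hasT, hasF, ihl, ihr]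
    tauto

theorem hasF_repl {A : Type} (G U V : ETree A) :
    (G.repl U V).hasF ↔ (G.hasT ∧ U.hasF) ∨ (G.hasF ∧ V.hasF) := by
  induction G with
  | leafT => simp [repl, hasT, hasF]
  | leafF => simp [repl, hasT, hasF]
  | node l a r ihl ihr =>
    simp only [repl, hasT, hasF, ihl, ihr]
    tauto

theorem size_le_repl {A : Type} (U V : ETree A) :
    ∀ G : ETree A, G.hasT → U.size ≤ (G.repl U V).size := by
  intro G
  induction G with
  | leafT => intro _; simp [repl]
  | leafF => intro h; exact absurd h (by simp [hasT])
  | node l a r ihl ihr =>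
    intro h
    rcases h with h | h
    · have := ihl h
      simp only [repl, size]
      omega
    · have := ihr h
      simp only [repl, size]
      omega

theorem size_lt_repl {A : Type} (U V : ETree A) (G : ETree A)
    (hT : G.hasT) (hF : G.hasF) : U.size < (G.repl U V).size := by
  cases G with
  | leafT => exact absurd hF (by simp [hasF])
  | leafF => exact absurd hT (by simp [hasT])
  | node l a r =>
    rcases hT with h | h
    · have h1 := size_le_repl U V l h
      have h2 := size_pos (r.repl U V)
      simp only [repl, size]
      omega
    · have h1 := size_le_repl U V r h
      have h2 := size_pos (l.repl U V)
      simp only [repl, size]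
      omega

end ETree

namespace DTree

theorem hasF_substD {A : Type} (Z : ETree A) :
    ∀ Y : DTree A, (Y.substD Z).hasF ↔ Y.hasF ∨ (Y.hasD ∧ Z.hasF) := by
  intro Y
  induction Y with
  | leafT => simp [substD, hasF, hasD, ETree.hasF]
  | leafF => simp [substD, hasF, hasD, ETree.hasF]
  | leafD => simp [substD, hasF, hasD]
  | node l a r ihl ihr =>
    simp only [substD, hasF, hasD, ETree.hasF, ihl, ihr]
    tauto

theorem size_le_substD {A : Type} (Z : ETree A) :
    ∀ Y : DTree A, Y.hasD → Z.size ≤ (Y.substD Z).size := by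
  intro Y
  induction Y with
  | leafT => intro h; exact absurd h (by simp [hasD])
  | leafF => intro h; exact absurd h (by simp [hasD])
  | leafD => intro _; simp [substD]
  | node l a r ihl ihr =>
    intro h
    rcases h with h | h
    · have := ihl h
      simp only [substD, ETree.size]
      omega
    · have := ihr h
      simp only [substD, ETree.size]
      omega

theorem size_lt_substD {A : Type} (Z : ETree A) (Y : DTree A)
    (hD : Y.hasD) (hT : Y.hasT) : Z.size < (Y.substD Z).size := by
  cases Y with
  | leafT => exact absurd hD (by simp [hasD])
  | leafF => exact absurd hT (by simp [hasT])
  | leafD => exact absurd hT (by simp [hasT])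
  | node l a r =>
    rcases hD with h | h
    · have h1 := size_le_substD Z l h
      have h2 := ETree.size_pos (r.substD Z)
      simp only [substD, ETree.size]
      omega
    · have h1 := size_le_substD Z r h
      have h2 := ETree.size_pos (l.substD Z)
      simp only [substD, ETree.size]
      omega

end DTree

/-- Key covering lemma 1: if `Y` is `F`-free and `G` has an `F`-leaf, then the
copy of `Z` covering that `F`-leaf shows `Z = G'[T↦U]` for some subtree `G'`
of `G` containing `F`. -/
theorem lem1 {A : Type} (U Z : ETree A) :
    ∀ (G : ETree A) (Y : DTree A), G.hasF → G.repl U .leafF = Y.substD Z → ¬ Y.hasF →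
      ∃ G' : ETree A, G'.hasF ∧ Z = G'.repl U .leafF := by
  intro G
  induction G with
  | leafT => intro Y h; exact absurd h (by simp [ETree.hasF])
  | leafF =>
    intro Y _ heq hYF
    cases Y with
    | leafT => simp [DTree.substD, ETree.repl] at heq
    | leafF => exact absurd (by simp [DTree.hasF]) hYF
    | leafD =>
      refine ⟨.leafF, by simp [ETree.hasF], ?_⟩
      simpa [DTree.substD, ETree.repl] using heq.symm
    | node Y1 b Y2 => simp [DTree.substD, ETree.repl] at heq
  | node l a r ihl ihr =>
    intro Y hF heq hYF
    cases Y with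
    | leafT => simp [DTree.substD, ETree.repl] at heq
    | leafF => exact absurd (by simp [DTree.hasF]) hYF
    | leafD =>
      refine ⟨.node l a r, hF, ?_⟩
      simpa [DTree.substD] using heq.symm
    | node Y1 b Y2 =>
      rw [ETree.repl, DTree.substD] at heq
      injection heq with h1 hb h2
      rcases hF with h | h
      · exact ihl Y1 h h1 (fun c => hYF (Or.inl c))
      · exact ihr Y2 h h2 (fun c => hYF (Or.inr c))

/-- Key covering lemma 2: if `Y` is `F`-free but has a `T`-leaf, and `U` has an
`F`-leaf, then `Z` is a proper subtree of `U`, so `Z.size < U.size`. -/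
theorem lem2 {A : Type} (U Z : ETree A) (hUF : U.hasF) :
    ∀ (G : ETree A) (Y : DTree A), G.repl U .leafF = Y.substD Z → Y.hasT → ¬ Y.hasF →
      Z.size < U.size := by
  intro G
  induction G with
  | leafT =>
    intro Y heq hYT hYF
    rw [ETree.repl] at heq
    have h := hUF
    rw [heq, DTree.hasF_substD] at h
    have hD : Y.hasD := (h.resolve_left hYF).1
    have := DTree.size_lt_substD Z Y hD hYT
    rwa [← heq] at this
  | leafF =>
    intro Y heq hYT hYF
    rw [ETree.repl] at heq
    cases Y with
    | leafT => simp [DTree.substD] at heq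
    | leafF => simp [DTree.hasT] at hYT
    | leafD => simp [DTree.hasT] at hYT
    | node Y1 b Y2 => simp [DTree.substD] at heq
  | node l a r ihl ihr =>
    intro Y heq hYT hYF
    cases Y with
    | leafT => simp [DTree.substD, ETree.repl] at heq
    | leafF => simp [DTree.hasT] at hYT
    | leafD => simp [DTree.hasT] at hYT
    | node Y1 b Y2 =>
      rw [ETree.repl, DTree.substD] at heq
      injection heq with h1 hb h2
      rcases hYT with h | h
      · exact ihl Y1 h1 h (fun c => hYF (Or.inl c))
      · exact ihr Y2 h2 h (fun c => hYF (Or.inr c))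

/-- The main tree-level lemma: `G[T↦U]` has no cdd-like decomposition. -/
theorem mainA {A : Type} (G U : ETree A) (Y : DTree A) (Z : ETree A)
    (hGF : G.hasF) (_hUT : U.hasT) (hUF : U.hasF)
    (heq : G.repl U .leafF = Y.substD Z) (hYT : Y.hasT) (hYF : ¬ Y.hasF)
    (hZT : Z.hasT) : False := by
  obtain ⟨G', hG'F, hZ⟩ := lem1 U Z G Y hGF heq hYF
  have hG'T : G'.hasT := by
    have h := hZT
    rw [hZ, ETree.hasT_repl] at h
    rcases h with ⟨h, _⟩ | ⟨_, h⟩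
    · exact h
    · exact absurd h (by simp [ETree.hasT])
  have h1 : U.size < Z.size := by
    have := ETree.size_lt_repl U .leafF G' hG'T hG'F
    rwa [← hZ] at this
  have h2 : Z.size < U.size := lem2 U Z hUF G Y heq hYT hYF
  omega

/-- Swap `T` and `F` leaves in an evaluation tree. -/
def eswap {A : Type} : ETree A → ETree A
  | .leafT => .leafF
  | .leafF => .leafT
  | .node l a r => .node (eswap l) a (eswap r)

/-- Swap `T` and `F` leaves in a decomposition tree. -/
def dswap {A : Type} : DTree A → DTree A
  | .leafT => .leafF
  | .leafF => .leafT
  | .leafD => .leafD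
  | .node l a r => .node (dswap l) a (dswap r)

theorem hasT_eswap {A : Type} (X : ETree A) : (eswap X).hasT ↔ X.hasF := by
  induction X with
  | leafT => simp [eswap, ETree.hasT, ETree.hasF]
  | leafF => simp [eswap, ETree.hasT, ETree.hasF]
  | node l a r ihl ihr => simp [eswap, ETree.hasT, ETree.hasF, ihl, ihr]

theorem hasF_eswap {A : Type} (X : ETree A) : (eswap X).hasF ↔ X.hasT := by
  induction X with
  | leafT => simp [eswap, ETree.hasT, ETree.hasF]
  | leafF => simp [eswap, ETree.hasT, ETree.hasF]
  | node l a r ihl ihr => simp [eswap, ETree.hasT, ETree.hasF, ihl, ihr]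

theorem hasT_dswap {A : Type} (Y : DTree A) : (dswap Y).hasT ↔ Y.hasF := by
  induction Y with
  | leafT => simp [dswap, DTree.hasT, DTree.hasF]
  | leafF => simp [dswap, DTree.hasT, DTree.hasF]
  | leafD => simp [dswap, DTree.hasT, DTree.hasF]
  | node l a r ihl ihr => simp [dswap, DTree.hasT, DTree.hasF, ihl, ihr]

theorem hasF_dswap {A : Type} (Y : DTree A) : (dswap Y).hasF ↔ Y.hasT := by
  induction Y with
  | leafT => simp [dswap, DTree.hasT, DTree.hasF]
  | leafF => simp [dswap, DTree.hasT, DTree.hasF]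
  | leafD => simp [dswap, DTree.hasT, DTree.hasF]
  | node l a r ihl ihr => simp [dswap, DTree.hasT, DTree.hasF, ihl, ihr]

theorem eswap_substD {A : Type} (Z : ETree A) :
    ∀ Y : DTree A, eswap (Y.substD Z) = (dswap Y).substD (eswap Z) := by
  intro Y
  induction Y with
  | leafT => simp [dswap, DTree.substD, eswap]
  | leafF => simp [dswap, DTree.substD, eswap]
  | leafD => simp [dswap, DTree.substD]
  | node l a r ihl ihr => simp [dswap, DTree.substD, eswap, ihl, ihr]

theorem eswap_repl {A : Type} (U V : ETree A) :
    ∀ G : ETree A, eswap (G.repl U V) = (eswap G).repl (eswap V) (eswap U) := by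
  intro G
  induction G with
  | leafT => simp [eswap, ETree.repl]
  | leafF => simp [eswap, ETree.repl]
  | node l a r ihl ihr => simp [eswap, ETree.repl, ihl, ihr]

/-- `se` of a T-term is all-`T`. -/
theorem tHas {A : Type} {P : STerm A} (h : IsTTerm P) :
    (se P).hasT ∧ ¬ (se P).hasF := by
  induction h with
  | tt => simp [se, ETree.hasT, ETree.hasF]
  | @node a P1 Q1 hP hQ ihP ihQ =>
    show ((((ETree.node .leafT a .leafF).repl (se P1) .leafF)).repl .leafT (se Q1)).hasT ∧
      ¬ ((((ETree.node .leafT a .leafF).repl (se P1) .leafF)).repl .leafT (se Q1)).hasF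
    simp only [ETree.hasT_repl, ETree.hasF_repl]
    simp [ETree.hasT, ETree.hasF, ihP.1, ihP.2, ihQ.1, ihQ.2]

/-- `se` of an F-term is all-`F`. -/
theorem fHas {A : Type} {P : STerm A} (h : IsFTerm P) :
    (se P).hasF ∧ ¬ (se P).hasT := by
  induction h with
  | ff => simp [se, ETree.hasT, ETree.hasF]
  | @node a P1 Q1 hP hQ ihP ihQ =>
    show ((((ETree.node .leafT a .leafF).repl .leafT (se P1))).repl (se Q1) .leafF).hasF ∧
      ¬ ((((ETree.node .leafT a .leafF).repl .leafT (se P1))).repl (se Q1) .leafF).hasT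
    simp only [ETree.hasT_repl, ETree.hasF_repl]
    simp [ETree.hasT, ETree.hasF, ihP.1, ihP.2, ihQ.1, ihQ.2]

/-- `se` of an ℓ-term has both `T` and `F`. -/
theorem lHas {A : Type} {P : STerm A} (h : IsLTerm P) :
    (se P).hasT ∧ (se P).hasF := by
  cases h with
  | @pos a P1 Q1 hP hQ =>
    have h1 := tHas hP
    have h2 := fHas hQ
    show ((((ETree.node .leafT a .leafF).repl (se P1) .leafF)).repl .leafT (se Q1)).hasT ∧
      ((((ETree.node .leafT a .leafF).repl (se P1) .leafF)).repl .leafT (se Q1)).hasF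
    simp only [ETree.hasT_repl, ETree.hasF_repl]
    simp [ETree.hasT, ETree.hasF, h1.1, h2.1]
  | @neg a P1 Q1 hP hQ =>
    have h1 := tHas hP
    have h2 := fHas hQ
    show (((((ETree.node .leafT a .leafF).repl .leafF .leafT)).repl (se P1) .leafF).repl
        .leafT (se Q1)).hasT ∧
      (((((ETree.node .leafT a .leafF).repl .leafF .leafT)).repl (se P1) .leafF).repl
        .leafT (se Q1)).hasF
    simp only [ETree.hasT_repl, ETree.hasF_repl]
    simp [ETree.hasT, ETree.hasF, h1.1, h2.1]

/-- Size of a statement. -/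
def tsize {A : Type} : STerm A → ℕ
  | .atom _ => 1
  | .tt => 1
  | .ff => 1
  | .neg P => tsize P + 1
  | .and P Q => tsize P + tsize Q + 1
  | .or P Q => tsize P + tsize Q + 1

theorem tsize_pos {A : Type} (P : STerm A) : 0 < tsize P := by
  cases P <;> simp [tsize]

/-- `se` of a *-term has both `T` and `F`. -/
theorem starHas {A : Type} :
    ∀ (n : ℕ) (P : STerm A), tsize P ≤ n → IsStarTerm P →
      (se P).hasT ∧ (se P).hasF := by
  intro n
  induction n with
  | zero =>
    intro P hP _
    have := tsize_pos P
    omega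
  | succ n ih =>
    intro P hP hs
    rcases hs with hc | hd
    · cases hc with
      | ell hl => exact lHas hl
      | @and P1 Q1 hP1 hQ1 =>
        have s1 : tsize P1 ≤ n := by simp [tsize] at hP; have := tsize_pos Q1; omega
        have s2 : tsize Q1 ≤ n := by simp [tsize] at hP; have := tsize_pos P1; omega
        have h1 := ih P1 s1 hP1
        have h2 := ih Q1 s2 (.d hQ1)
        show ((se P1).repl (se Q1) .leafF).hasT ∧ ((se P1).repl (se Q1) .leafF).hasF
        rw [ETree.hasT_repl, ETree.hasF_repl]
        simp [ETree.hasT, ETree.hasF, h1.1, h1.2, h2.1, h2.2]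
    · cases hd with
      | ell hl => exact lHas hl
      | @or P1 Q1 hP1 hQ1 =>
        have s1 : tsize P1 ≤ n := by simp [tsize] at hP; have := tsize_pos Q1; omega
        have s2 : tsize Q1 ≤ n := by simp [tsize] at hP; have := tsize_pos P1; omega
        have h1 := ih P1 s1 hP1
        have h2 := ih Q1 s2 (.c hQ1)
        show ((se P1).repl .leafT (se Q1)).hasT ∧ ((se P1).repl .leafT (se Q1)).hasF
        rw [ETree.hasT_repl, ETree.hasF_repl]
        simp [ETree.hasT, ETree.hasF, h1.1, h1.2, h2.1, h2.2]

/-- For a *-term `P ∧❛ Q`, `se(P ∧❛ Q)` has no cdd; for a *-term `P ∨❛ Q`,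
`se(P ∨❛ Q)` has no ccd. -/
theorem no_cdd_no_ccd {A : Type} [Nonempty A] :
    (∀ P Q : STerm A, IsStarTerm P → IsDTerm Q →
      ¬ ∃ (Y : DTree A) (Z : ETree A), IsCDD Y Z (se (.and P Q))) ∧
    (∀ P Q : STerm A, IsStarTerm P → IsCTerm Q →
      ¬ ∃ (Y : DTree A) (Z : ETree A), IsCCD Y Z (se (.or P Q))) := by
  constructor
  · rintro P Q hP hQ ⟨Y, Z, heq, hYD, hYT, hYF, hZT, hZF⟩
    have hG := starHas (tsize P) P le_rfl hP
    have hU := starHas (tsize Q) Q le_rfl (.d hQ)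
    exact mainA (se P) (se Q) Y Z hG.2 hU.1 hU.2 heq hYT hYF hZT
  · rintro P Q hP hQ ⟨Y, Z, heq, hYD, hYF, hYT, hZT, hZF⟩
    have hG := starHas (tsize P) P le_rfl hP
    have hU := starHas (tsize Q) Q le_rfl (.c hQ)
    have heq' : (eswap (se P)).repl (eswap (se Q)) .leafF = (dswap Y).substD (eswap Z) := by
      have e : eswap (se (STerm.or P Q)) = (eswap (se P)).repl (eswap (se Q)) .leafF := by
        show eswap ((se P).repl .leafT (se Q)) = _
        rw [eswap_repl]
        rfl
      rw [← eswap_substD, ← heq, e]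
    exact mainA (eswap (se P)) (eswap (se Q)) (dswap Y) (eswap Z)
      ((hasF_eswap _).2 hG.1) ((hasT_eswap _).2 hU.2) ((hasF_eswap _).2 hU.1)
      heq' ((hasT_dswap _).2 hYF) (fun c => hYT ((hasF_dswap _).1 c))
      ((hasT_eswap _).2 hZF)
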